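/- Let {X_i : i ≥ 1} be nonnegative-integer-valued random variables with strong uniform exponential tail decay: there exist C_0, C_1 > 0 such that P(X_i > n | X_1, …, X_{i−1}) ≤ C_0 exp(−C_1 n) almost surely for all i ≥ 1 and all n ∈ ℕ. Let Y be a positive-integer-valued random variable on the same probability space (not assumed independent of the X_i) with P(Y > n) ≤ C_0 exp(−C_1 n) for all n. Then there exist constants C_0', C_1' > 0 such that P(∑_{i=1}^{Y} X_i > n) ≤ C_0' exp(−C_1' n) for all n ∈ ℕ. -/

import Mathlib

open MeasureTheory ProbabilityTheory
open scoped ENNReal ENat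

noncomputable section

/-- The parabolic region `∇(v)`: the set of `w` lying (weakly) above `v` with
`|w.1 - v.1| ≤ (w.2 - v.2)^2`. -/
def nablaRel (v w : ℤ × ℤ) : Prop :=
  v.2 ≤ w.2 ∧ w.1 - v.1 ≤ (w.2 - v.2) ^ 2 ∧ -((w.2 - v.2) ^ 2) ≤ w.1 - v.1

/-- The data of the perturbed Howard model: an i.i.d. family
`Γ_u = (B_u, R_u, (X_u, Y_u))`, `u ∈ ℤ²`, where `B_u` is Bernoulli(p), `R_u` is a Rademacher
variable, and `(X_u, Y_u)` is the perturbation vector with the prescribed marginals,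
the three families being mutually independent. -/
structure PHModel (Ω : Type) [MeasurableSpace Ω] where
  μ : Measure Ω
  prob : IsProbabilityMeasure μ
  p : ℝ
  θx : ℝ
  θy : ℝ
  hp : 0 < p ∧ p < 1
  hθx : 0 < θx ∧ θx < 1
  hθy : 0 < θy ∧ θy < 1
  B : ℤ × ℤ → Ω → Bool
  Rad : ℤ × ℤ → Ω → ℤ
  X : ℤ × ℤ → Ω → ℤ
  Y : ℤ × ℤ → Ω → ℤ
  measΓ : ∀ u, Measurable fun ω => (B u ω, Rad u ω, X u ω, Y u ω)
  iidΓ : iIndepFun (fun u ω => (B u ω, Rad u ω, X u ω, Y u ω)) μ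
  identΓ : ∀ u, Measure.map (fun ω => (B u ω, Rad u ω, X u ω, Y u ω)) μ
      = Measure.map (fun ω => (B 0 ω, Rad 0 ω, X 0 ω, Y 0 ω)) μ
  indepBRL : iIndep
      ![⨆ u : ℤ × ℤ, MeasurableSpace.comap (B u) inferInstance,
        ⨆ u : ℤ × ℤ, MeasurableSpace.comap (Rad u) inferInstance,
        ⨆ u : ℤ × ℤ, MeasurableSpace.comap (fun ω => (X u ω, Y u ω)) inferInstance] μ
  lawB : ∀ u, μ {ω | B u ω = true} = ENNReal.ofReal p
  lawRad : ∀ u, μ {ω | Rad u ω = 1} = 1 / 2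
  RadSigns : ∀ u ω, Rad u ω = 1 ∨ Rad u ω = -1
  lawX : ∀ u (j : ℤ), μ {ω | X u ω = j} = ENNReal.ofReal (θx * ((1 - θx) / 2) ^ j.natAbs)
  Ynn : ∀ u ω, 0 ≤ Y u ω
  lawY : ∀ u (j : ℕ), μ {ω | Y u ω = (j : ℤ)} = ENNReal.ofReal (θy * (1 - θy) ^ j)
  hXY0 : ∀ u, 0 < μ {ω | X u ω = 0 ∧ Y u ω = 0}

namespace PHModel

variable {Ω : Type} [MeasurableSpace Ω]

/-- The full random vector `Γ_u`. -/
def Γfun (M : PHModel Ω) (u : ℤ × ℤ) (ω : Ω) : Bool × ℤ × ℤ × ℤ :=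
  (M.B u ω, M.Rad u ω, M.X u ω, M.Y u ω)

/-- The perturbed position `ũ = u + Λ_u` of the lattice point `u`. -/
def pert (M : PHModel Ω) (u : ℤ × ℤ) (ω : Ω) : ℤ × ℤ :=
  (u.1 + M.X u ω, u.2 + M.Y u ω)

/-- The set `V` of perturbed open vertices. -/
def V (M : PHModel Ω) (ω : Ω) : Set (ℤ × ℤ) :=
  {v | ∃ u : ℤ × ℤ, M.B u ω = true ∧ v = M.pert u ω}

/-- `J(u)`: distance to the nearest point of `V` on the line `y = u.2 + 1`. -/
def J (M : PHModel Ω) (u : ℤ × ℤ) (ω : Ω) : ℕ :=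
  sInf {k : ℕ | (u.1 + (k : ℤ), u.2 + 1) ∈ M.V ω ∨ (u.1 - (k : ℤ), u.2 + 1) ∈ M.V ω}

open Classical in
/-- The perturbed Howard step `h(u)`. -/
def step (M : PHModel Ω) (u : ℤ × ℤ) (ω : Ω) : ℤ × ℤ :=
  if (u.1 + (M.J u ω : ℤ), u.2 + 1) ∈ M.V ω ∧ (u.1 - (M.J u ω : ℤ), u.2 + 1) ∉ M.V ω then
    (u.1 + (M.J u ω : ℤ), u.2 + 1)
  else if (u.1 - (M.J u ω : ℤ), u.2 + 1) ∈ M.V ω ∧ (u.1 + (M.J u ω : ℤ), u.2 + 1) ∉ M.V ω then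
    (u.1 - (M.J u ω : ℤ), u.2 + 1)
  else (u.1 + M.Rad u ω * (M.J u ω : ℤ), u.2 + 1)

/-- Iterated steps `h^n(u)`. -/
def iter (M : PHModel Ω) : ℕ → ℤ × ℤ → Ω → ℤ × ℤ
  | 0, u, _ => u
  | n + 1, u, ω => M.step (M.iter n u ω) ω

/-- The σ-field `F_n = σ(Γ_w : w.2 ≤ n)`. -/
def Fσ (M : PHModel Ω) (n : ℤ) : MeasurableSpace Ω :=
  ⨆ w : {w : ℤ × ℤ // w.2 ≤ n}, MeasurableSpace.comap (M.Γfun w.1) inferInstance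

/-- The event `In(v)`: the path started at `v` stays in `∇(v)` for ever. -/
def InEvt (M : PHModel Ω) (v : ℤ × ℤ) : Set Ω :=
  {ω | ∀ n : ℕ, 1 ≤ n → nablaRel v (M.iter n v ω)}

/-- The event that `In(h^n(x_i))` occurs for every `i`. -/
def InAll (M : PHModel Ω) (k : ℕ) (x : Fin k → ℤ × ℤ) (n : ℕ) : Set Ω :=
  {ω | ∀ i : Fin k, ω ∈ M.InEvt (M.iter n (x i) ω)}

/-- The `In` steps `τ_j` of the joint exploration process (with value `⊤` if there is
no further `In` step). -/
def tau (M : PHModel Ω) (k : ℕ) (x : Fin k → ℤ × ℤ) : ℕ → Ω → ℕ∞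
  | 0, _ => 0
  | j + 1, ω =>
    sInf {m : ℕ∞ | ∃ n : ℕ, m = (n : ℕ∞) ∧ M.tau k x j ω < (n : ℕ∞) ∧ ω ∈ M.InAll k x n}

/-- The enlarged σ-field `F̄_n`. -/
def Fbar (M : PHModel Ω) (k : ℕ) (x : Fin k → ℤ × ℤ) (n : ℕ) : MeasurableSpace Ω :=
  M.Fσ n ⊔ MeasurableSpace.generateFrom
    {s | ∃ i : Fin k, ∃ m : ℕ, m ≤ n ∧ s = {ω | ω ∈ M.InEvt (M.iter m (x i) ω)}}

/-- The stopped σ-field `G_j = F̄_{τ_j}`. -/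
def Gσ (M : PHModel Ω) (k : ℕ) (x : Fin k → ℤ × ℤ) (j : ℕ) : MeasurableSpace Ω :=
  MeasurableSpace.generateFrom
    {s | MeasurableSet s ∧
      ∀ n : ℕ, MeasurableSet[M.Fbar k x n] (s ∩ {ω | M.tau k x j ω ≤ (n : ℕ∞)})}

/-- The information set `I_l`: perturbed open points coming from the closed lower
half-plane `{w : w.2 ≤ l}` that land strictly above level `l`. -/
def Iinfo (M : PHModel Ω) (l : ℤ) (ω : Ω) : Set (ℤ × ℤ) :=
  {v | (∃ u : ℤ × ℤ, u.2 ≤ l ∧ M.B u ω = true ∧ v = M.pert u ω) ∧ l < v.2}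

open Classical in
/-- Indicator-function version of the information set `I_l`. -/
def IinfoInd (M : PHModel Ω) (l : ℤ) (ω : Ω) : ℤ × ℤ → Bool :=
  fun w => if w ∈ M.Iinfo l ω then true else false

/-- The set `H_{τ_j} = I_{τ_j} ∩ (∪_i ∇(h^{τ_j}(x_i)))`. -/
def Hset (M : PHModel Ω) (k : ℕ) (x : Fin k → ℤ × ℤ) (j : ℕ) (ω : Ω) : Set (ℤ × ℤ) :=
  {v | ∃ n : ℕ, M.tau k x j ω = (n : ℕ∞) ∧ v ∈ M.Iinfo (n : ℤ) ω ∧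
    ∃ i : Fin k, nablaRel (M.iter n (x i) ω) v}

/-- The renewal indices `γ_ℓ`. -/
def gam (M : PHModel Ω) (k : ℕ) (x : Fin k → ℤ × ℤ) : ℕ → Ω → ℕ∞
  | 0, _ => 0
  | ℓ + 1, ω =>
    sInf {m : ℕ∞ | ∃ j : ℕ, m = (j : ℕ∞) ∧ M.gam k x ℓ ω < (j : ℕ∞) ∧
      M.tau k x j ω ≠ ⊤ ∧ M.Hset k x j ω = ∅}

/-- The renewal steps `σ_ℓ = τ_{γ_ℓ}`. -/
def sig (M : PHModel Ω) (k : ℕ) (x : Fin k → ℤ × ℤ) (ℓ : ℕ) (ω : Ω) : ℕ∞ :=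
  if M.gam k x ℓ ω = ⊤ then ⊤ else M.tau k x (M.gam k x ℓ ω).toNat ω

/-- The stopped σ-field `S_ℓ = G_{γ_ℓ}`. -/
def Sσ (M : PHModel Ω) (k : ℕ) (x : Fin k → ℤ × ℤ) (ℓ : ℕ) : MeasurableSpace Ω :=
  MeasurableSpace.generateFrom
    {s | MeasurableSet s ∧
      ∀ j : ℕ, MeasurableSet[M.Gσ k x j] (s ∩ {ω | M.gam k x ℓ ω ≤ (j : ℕ∞)})}

/-- The height process `L_j = (sup {w.2 - τ_j : w ∈ H_{τ_j}}) ∨ 0`. -/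
def Lht (M : PHModel Ω) (k : ℕ) (x : Fin k → ℤ × ℤ) (j : ℕ) (ω : Ω) : ℕ∞ :=
  ⨆ v ∈ M.Hset k x j ω, (((v.2 - ((M.tau k x j ω).toNat : ℤ)).toNat : ℕ∞))

/-- The contribution `N_j` (for `j ≥ 1`) of newly explored vertices, i.e. of open `w` with
`τ_{j-1} < w.2 ≤ τ_j` whose perturbation lands in `∪_i ∇(h^{τ_j}(x_i))`. -/
def NN (M : PHModel Ω) (k : ℕ) (x : Fin k → ℤ × ℤ) (j : ℕ) (ω : Ω) : ℕ∞ :=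
  1 + ⨆ w ∈ {w : ℤ × ℤ | 0 < w.2 ∧ M.tau k x (j - 1) ω < ((w.2.toNat : ℕ∞)) ∧
        ((w.2.toNat : ℕ∞)) ≤ M.tau k x j ω ∧ M.B w ω = true ∧
        ∃ i : Fin k, nablaRel (M.iter (M.tau k x j ω).toNat (x i) ω) (M.pert w ω)},
      (((M.pert w ω).2 - ((M.tau k x j ω).toNat : ℤ)).toNat : ℕ∞)

/-- The set of special (unperturbed open) vertices. -/
def Vsp (M : PHModel Ω) (ω : Ω) : Set (ℤ × ℤ) :=
  {u | M.B u ω = true ∧ M.X u ω = 0 ∧ M.Y u ω = 0}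

/-- `J_sp(u)`: distance to the nearest special point on the line `y = u.2 + 1`. -/
def Jsp (M : PHModel Ω) (u : ℤ × ℤ) (ω : Ω) : ℕ :=
  sInf {k : ℕ | (u.1 + (k : ℤ), u.2 + 1) ∈ M.Vsp ω ∨ (u.1 - (k : ℤ), u.2 + 1) ∈ M.Vsp ω}

/-- Position of the single path started at `x₁` at its `ℓ`-th renewal step,
`Y_ℓ = h^{σ_ℓ}(x₁)`. -/
def renewPos (M : PHModel Ω) (x₁ : ℤ × ℤ) (ℓ : ℕ) (ω : Ω) : ℤ × ℤ :=
  M.iter (M.sig 1 (fun _ => x₁) ℓ ω).toNat x₁ ω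

/-- The renewal increments `Y_{ℓ+1} - Y_ℓ`. -/
def renewIncr (M : PHModel Ω) (x₁ : ℤ × ℤ) (ℓ : ℕ) (ω : Ω) : ℤ × ℤ :=
  M.renewPos x₁ (ℓ + 1) ω - M.renewPos x₁ ℓ ω

/-- The difference process `Z_ℓ` of two paths observed at joint renewal steps. -/
def Zdiff (M : PHModel Ω) (x : Fin 2 → ℤ × ℤ) (ℓ : ℕ) (ω : Ω) : ℤ :=
  (M.iter (M.sig 2 x ℓ ω).toNat (x 1) ω).1 - (M.iter (M.sig 2 x ℓ ω).toNat (x 0) ω).1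

/-- The linearly interpolated perturbed Howard path started at `x`,
as a real-valued function of time `t ≥ x.2`. -/
def path (M : PHModel Ω) (x : ℤ × ℤ) (ω : Ω) (t : ℝ) : ℝ :=
  (1 - (t - ((x.2 : ℝ) + ((⌊t⌋ - x.2).toNat : ℝ)))) *
      ((M.iter (⌊t⌋ - x.2).toNat x ω).1 : ℝ) +
    (t - ((x.2 : ℝ) + ((⌊t⌋ - x.2).toNat : ℝ))) *
      ((M.iter ((⌊t⌋ - x.2).toNat + 1) x ω).1 : ℝ)

/-- The coalescence time `T(x₁, x₂)` of the two paths started at `x₁` and `x₂`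
(`⊤` if they never meet). -/
def coalT (M : PHModel Ω) (x₁ x₂ : ℤ × ℤ) (ω : Ω) : ℝ≥0∞ :=
  sInf {t : ℝ≥0∞ | ∃ r : ℝ, 0 ≤ r ∧ t = ENNReal.ofReal r ∧ M.path x₁ ω r = M.path x₂ ω r}

/-- The (undirected) perturbed Howard graph `G = (V, E)`: `a` and `b` are adjacent iff one of
them belongs to `V` and maps to the other under the step `h`. -/
def graphG (M : PHModel Ω) (ω : Ω) : SimpleGraph (ℤ × ℤ) where
  Adj a b := a ≠ b ∧ ((a ∈ M.V ω ∧ M.step a ω = b) ∨ (b ∈ M.V ω ∧ M.step b ω = a))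
  symm := by
    constructor
    intro a b h
    exact ⟨h.1.symm, h.2.symm⟩
  loopless := by
    constructor
    intro a h
    exact h.1 rfl

end PHModel

section RandomSumAux

variable {Ω : Type} [MeasurableSpace Ω]

/-- Atom of `σ(X_0, …, X_{m-1})` on which `X_j = v j` for all `j < m`. -/
def rsAtom (X : ℕ → Ω → ℕ) (m : ℕ) (v : Fin m → ℕ) : Set Ω :=
  {ω | ∀ j : Fin m, X j ω = v j}

lemma rsAtom_measurable (X : ℕ → Ω → ℕ) (hX : ∀ i, Measurable (X i)) (m : ℕ)
    (v : Fin m → ℕ) : MeasurableSet (rsAtom X m v) := by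
  have h : rsAtom X m v = ⋂ j : Fin m, X (j : ℕ) ⁻¹' {v j} := by
    ext ω; simp [rsAtom, Set.mem_iInter, Set.mem_preimage]
  rw [h]
  exact MeasurableSet.iInter fun j => (hX j) (measurableSet_singleton (v j))

lemma rsAtom_partition (μ : Measure Ω) (X : ℕ → Ω → ℕ) (hX : ∀ i, Measurable (X i))
    (m : ℕ) {T : Set Ω} (hT : MeasurableSet T) :
    μ T = ∑' v : Fin m → ℕ, μ (rsAtom X m v ∩ T) := by
  have hcov : T = ⋃ v : Fin m → ℕ, rsAtom X m v ∩ T := by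
    ext ω
    constructor
    · intro hω
      exact Set.mem_iUnion.2 ⟨fun j => X j ω, fun j => rfl, hω⟩
    · intro hω
      rcases Set.mem_iUnion.1 hω with ⟨v, hv⟩
      exact hv.2
  have hdisj : Pairwise (Function.onFun Disjoint fun v : Fin m → ℕ => rsAtom X m v ∩ T) := by
    intro v w hvw
    refine Set.disjoint_left.2 ?_
    rintro ω ⟨hv, -⟩ ⟨hw, -⟩
    exact hvw (funext fun j => (hv j).symm.trans (hw j))
  conv_lhs => rw [hcov]
  exact measure_iUnion hdisj fun v => (rsAtom_measurable X hX m v).inter hT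

lemma rsAtom_snoc (X : ℕ → Ω → ℕ) (m : ℕ) (v : Fin m → ℕ) (n : ℕ) :
    rsAtom X (m + 1) (Fin.snoc v n) = rsAtom X m v ∩ {ω | X m ω = n} := by
  ext ω
  constructor
  · intro h
    refine ⟨fun j => ?_, ?_⟩
    · have := h j.castSucc
      simpa [Fin.snoc_castSucc] using this
    · have := h (Fin.last m)
      simpa [Fin.snoc_last] using this
  · rintro ⟨h1, h2⟩ j
    induction j using Fin.lastCases with
    | last => simpa [Fin.snoc_last] using h2
    | cast i => simpa [Fin.snoc_castSucc] using h1 i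

section TailBounds

variable (μ : Measure Ω) [IsProbabilityMeasure μ] (X : ℕ → Ω → ℕ)
  (hX : ∀ i, Measurable (X i)) (C₀ C₁ : ℝ) (hC₀ : 0 < C₀) (hC₁ : 0 < C₁)
  (hXtail : ∀ (i : ℕ) (v : ℕ → ℕ) (n : ℕ),
      0 < μ {ω | ∀ j < i, X j ω = v j} →
      (μ[|{ω | ∀ j < i, X j ω = v j}]) {ω | n < X i ω}
        ≤ ENNReal.ofReal (C₀ * Real.exp (-C₁ * n)))

include hX hXtail in
lemma rs_cond_bound (i : ℕ) (v : Fin i → ℕ) (t : ℕ) :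
    μ (rsAtom X i v ∩ {ω | t < X i ω})
      ≤ ENNReal.ofReal (C₀ * Real.exp (-C₁ * t)) * μ (rsAtom X i v) := by
  classical
  set vext : ℕ → ℕ := fun j => if h : j < i then v ⟨j, h⟩ else 0 with hvext
  have hset : {ω | ∀ j < i, X j ω = vext j} = rsAtom X i v := by
    ext ω
    constructor
    · intro h j
      have := h j j.isLt
      simpa [hvext, j.isLt] using this
    · intro h j hj
      simpa [hvext, hj] using h ⟨j, hj⟩
  by_cases h0 : μ (rsAtom X i v) = 0
  · have : μ (rsAtom X i v ∩ {ω | t < X i ω}) = 0 :=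
      le_antisymm (le_trans (measure_mono Set.inter_subset_left) h0.le) bot_le
    simp [this]
  · have hpos : 0 < μ {ω | ∀ j < i, X j ω = vext j} := by
      rw [hset]; exact pos_iff_ne_zero.2 h0
    have htail := hXtail i vext t hpos
    rw [hset, ProbabilityTheory.cond_apply (rsAtom_measurable X hX i v)] at htail
    have hfin : μ (rsAtom X i v) ≠ ⊤ := measure_ne_top μ _
    calc μ (rsAtom X i v ∩ {ω | t < X i ω})
        = μ (rsAtom X i v) * ((μ (rsAtom X i v))⁻¹ * μ (rsAtom X i v ∩ {ω | t < X i ω})) := by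
          rw [← mul_assoc, ENNReal.mul_inv_cancel h0 hfin, one_mul]
      _ ≤ μ (rsAtom X i v) * ENNReal.ofReal (C₀ * Real.exp (-C₁ * t)) :=
          mul_le_mul_right htail _
      _ = ENNReal.ofReal (C₀ * Real.exp (-C₁ * t)) * μ (rsAtom X i v) := mul_comm _ _

include hX hC₀ hC₁ hXtail in
lemma rs_inner_bound (m : ℕ) (v : Fin m → ℕ) :
    ∑' n : ℕ, ENNReal.ofReal (Real.exp (C₁ / 2 * n)) * μ (rsAtom X m v ∩ {ω | X m ω = n})
      ≤ ENNReal.ofReal (1 + C₀ * Real.exp (C₁ / 2) * (1 - Real.exp (-(C₁ / 2)))⁻¹)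
          * μ (rsAtom X m v) := by
  have hlpos : 0 < C₁ / 2 := by linarith
  have hgeo : Real.exp (-(C₁ / 2)) < 1 := Real.exp_lt_one_iff.2 (by linarith)
  have hgeonn : (0 : ℝ) ≤ Real.exp (-(C₁ / 2)) := (Real.exp_pos _).le
  have hsubpos : (0 : ℝ) < 1 - Real.exp (-(C₁ / 2)) := by linarith
  set A := rsAtom X m v with hA
  have key : ∀ j : ℕ,
      ENNReal.ofReal (Real.exp (C₁ / 2 * ((j : ℝ) + 1))) * μ (A ∩ {ω | X m ω = j + 1})
        ≤ ENNReal.ofReal (C₀ * Real.exp (C₁ / 2) * Real.exp (-(C₁ / 2)) ^ j) * μ A := by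
    intro j
    have hsub : A ∩ {ω | X m ω = j + 1} ⊆ A ∩ {ω | j < X m ω} := by
      rintro ω ⟨h1, h2⟩
      exact ⟨h1, by simp only [Set.mem_setOf_eq] at h2 ⊢; omega⟩
    have h1 : μ (A ∩ {ω | X m ω = j + 1})
        ≤ ENNReal.ofReal (C₀ * Real.exp (-C₁ * j)) * μ A :=
      le_trans (measure_mono hsub) (rs_cond_bound μ X hX C₀ C₁ hXtail m v j)
    have hexp : Real.exp (C₁ / 2 * ((j : ℝ) + 1)) * (C₀ * Real.exp (-C₁ * j))
        = C₀ * Real.exp (C₁ / 2) * Real.exp (-(C₁ / 2)) ^ j := by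
      calc Real.exp (C₁ / 2 * ((j : ℝ) + 1)) * (C₀ * Real.exp (-C₁ * j))
          = C₀ * Real.exp (C₁ / 2 * ((j : ℝ) + 1) + -C₁ * j) := by
            rw [Real.exp_add]; ring
        _ = C₀ * (Real.exp (C₁ / 2) * Real.exp ((j : ℝ) * -(C₁ / 2))) := by
            rw [← Real.exp_add]; congr 1; ring
        _ = C₀ * Real.exp (C₁ / 2) * Real.exp (-(C₁ / 2)) ^ j := by
            rw [← Real.exp_nat_mul, mul_assoc]
    calc ENNReal.ofReal (Real.exp (C₁ / 2 * ((j : ℝ) + 1))) * μ (A ∩ {ω | X m ω = j + 1})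
        ≤ ENNReal.ofReal (Real.exp (C₁ / 2 * ((j : ℝ) + 1)))
            * (ENNReal.ofReal (C₀ * Real.exp (-C₁ * j)) * μ A) := mul_le_mul_right h1 _
      _ = ENNReal.ofReal (Real.exp (C₁ / 2 * ((j : ℝ) + 1)) * (C₀ * Real.exp (-C₁ * j)))
            * μ A := by
          rw [← mul_assoc, ← ENNReal.ofReal_mul (Real.exp_pos _).le]
      _ = ENNReal.ofReal (C₀ * Real.exp (C₁ / 2) * Real.exp (-(C₁ / 2)) ^ j) * μ A := by
          rw [hexp]
  rw [tsum_eq_zero_add' ENNReal.summable]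
  have h0 : ENNReal.ofReal (Real.exp (C₁ / 2 * ((0 : ℕ) : ℝ))) * μ (A ∩ {ω | X m ω = 0})
      ≤ μ A := by
    simp only [Nat.cast_zero, mul_zero, Real.exp_zero, ENNReal.ofReal_one, one_mul]
    exact measure_mono Set.inter_subset_left
  have hs : ∑' j : ℕ, ENNReal.ofReal (Real.exp (C₁ / 2 * ((j + 1 : ℕ) : ℝ)))
        * μ (A ∩ {ω | X m ω = j + 1})
      ≤ ENNReal.ofReal (C₀ * Real.exp (C₁ / 2) * (1 - Real.exp (-(C₁ / 2)))⁻¹) * μ A := by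
    have hsummable : Summable fun j : ℕ =>
        C₀ * Real.exp (C₁ / 2) * Real.exp (-(C₁ / 2)) ^ j :=
      (summable_geometric_of_lt_one hgeonn hgeo).mul_left _
    calc ∑' j : ℕ, ENNReal.ofReal (Real.exp (C₁ / 2 * ((j + 1 : ℕ) : ℝ)))
          * μ (A ∩ {ω | X m ω = j + 1})
        ≤ ∑' j : ℕ, ENNReal.ofReal (C₀ * Real.exp (C₁ / 2) * Real.exp (-(C₁ / 2)) ^ j)
            * μ A := by
          refine ENNReal.tsum_le_tsum fun j => ?_
          have := key j
          simpa [Nat.cast_add, Nat.cast_one] using this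
      _ = (∑' j : ℕ, ENNReal.ofReal (C₀ * Real.exp (C₁ / 2) * Real.exp (-(C₁ / 2)) ^ j))
            * μ A := ENNReal.tsum_mul_right
      _ = ENNReal.ofReal (C₀ * Real.exp (C₁ / 2) * (1 - Real.exp (-(C₁ / 2)))⁻¹) * μ A := by
          congr 1
          rw [← ENNReal.ofReal_tsum_of_nonneg (fun j => by positivity) hsummable]
          congr 1
          rw [tsum_mul_left, tsum_geometric_of_lt_one hgeonn hgeo]
  calc ENNReal.ofReal (Real.exp (C₁ / 2 * ((0 : ℕ) : ℝ))) * μ (A ∩ {ω | X m ω = 0})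
        + ∑' j : ℕ, ENNReal.ofReal (Real.exp (C₁ / 2 * ((j + 1 : ℕ) : ℝ)))
            * μ (A ∩ {ω | X m ω = j + 1})
      ≤ μ A + ENNReal.ofReal (C₀ * Real.exp (C₁ / 2) * (1 - Real.exp (-(C₁ / 2)))⁻¹) * μ A :=
        add_le_add h0 hs
    _ = ENNReal.ofReal (1 + C₀ * Real.exp (C₁ / 2) * (1 - Real.exp (-(C₁ / 2)))⁻¹) * μ A := by
        rw [ENNReal.ofReal_add (by norm_num) (by positivity), ENNReal.ofReal_one, add_mul,
          one_mul]

/-- The exponential moment of the partial sums, computed over atoms. -/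
noncomputable def rsMgf (μ : Measure Ω) (X : ℕ → Ω → ℕ) (l : ℝ) (m : ℕ) : ℝ≥0∞ :=
  ∑' v : Fin m → ℕ, ENNReal.ofReal (Real.exp (l * ∑ j, (v j : ℝ))) * μ (rsAtom X m v)

lemma rsMgf_zero (l : ℝ) : rsMgf μ X l 0 = 1 := by
  have huniv : rsAtom X 0 (fun j => 0) = Set.univ := by
    ext ω; simp [rsAtom]
  rw [rsMgf, tsum_eq_single (fun _ => 0) (fun v hv => absurd (Subsingleton.elim v _) hv)]
  simp [huniv]

include hX hC₀ hC₁ hXtail in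
lemma rsMgf_succ_le (m : ℕ) :
    rsMgf μ X (C₁ / 2) (m + 1)
      ≤ ENNReal.ofReal (1 + C₀ * Real.exp (C₁ / 2) * (1 - Real.exp (-(C₁ / 2)))⁻¹)
          * rsMgf μ X (C₁ / 2) m := by
  classical
  set K := 1 + C₀ * Real.exp (C₁ / 2) * (1 - Real.exp (-(C₁ / 2)))⁻¹ with hK
  rw [rsMgf, ← (Fin.snocEquiv (fun _ => ℕ)).tsum_eq]
  have hterm : ∀ p : ℕ × (Fin m → ℕ),
      ENNReal.ofReal (Real.exp (C₁ / 2 * ∑ j, ((Fin.snocEquiv (fun _ => ℕ) p) j : ℝ)))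
          * μ (rsAtom X (m + 1) (Fin.snocEquiv (fun _ => ℕ) p))
        = ENNReal.ofReal (Real.exp (C₁ / 2 * ∑ j, (p.2 j : ℝ)))
            * (ENNReal.ofReal (Real.exp (C₁ / 2 * (p.1 : ℝ)))
              * μ (rsAtom X m p.2 ∩ {ω | X m ω = p.1})) := by
    rintro ⟨n, v⟩
    have hsnoc : (Fin.snocEquiv (fun _ => ℕ) (n, v))
        = (Fin.snoc (α := fun _ => ℕ) v n) := rfl
    have hsum : ∑ j : Fin (m + 1), (((Fin.snoc (α := fun _ => ℕ) v n) j : ℕ) : ℝ)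
        = (∑ j : Fin m, (v j : ℝ)) + (n : ℝ) := by
      rw [Fin.sum_univ_castSucc]
      simp [Fin.snoc_castSucc, Fin.snoc_last]
    rw [hsnoc, rsAtom_snoc, hsum, mul_add, Real.exp_add,
      ENNReal.ofReal_mul (Real.exp_pos _).le, mul_assoc]
  calc ∑' p : ℕ × (Fin m → ℕ),
        ENNReal.ofReal (Real.exp (C₁ / 2 * ∑ j, ((Fin.snocEquiv (fun _ => ℕ) p) j : ℝ)))
          * μ (rsAtom X (m + 1) (Fin.snocEquiv (fun _ => ℕ) p))
      = ∑' n : ℕ, ∑' v : Fin m → ℕ,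
          ENNReal.ofReal (Real.exp (C₁ / 2 * ∑ j, (v j : ℝ)))
            * (ENNReal.ofReal (Real.exp (C₁ / 2 * (n : ℝ)))
              * μ (rsAtom X m v ∩ {ω | X m ω = n})) := by
        rw [tsum_congr hterm]
        exact ENNReal.tsum_prod (f := fun (n : ℕ) (v : Fin m → ℕ) =>
          ENNReal.ofReal (Real.exp (C₁ / 2 * ∑ j, (v j : ℝ)))
            * (ENNReal.ofReal (Real.exp (C₁ / 2 * (n : ℝ)))
              * μ (rsAtom X m v ∩ {ω | X m ω = n})))
    _ = ∑' v : Fin m → ℕ, ∑' n : ℕ,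
          ENNReal.ofReal (Real.exp (C₁ / 2 * ∑ j, (v j : ℝ)))
            * (ENNReal.ofReal (Real.exp (C₁ / 2 * (n : ℝ)))
              * μ (rsAtom X m v ∩ {ω | X m ω = n})) := ENNReal.tsum_comm
    _ ≤ ∑' v : Fin m → ℕ,
          ENNReal.ofReal (Real.exp (C₁ / 2 * ∑ j, (v j : ℝ)))
            * (ENNReal.ofReal K * μ (rsAtom X m v)) := by
        refine ENNReal.tsum_le_tsum fun v => ?_
        rw [ENNReal.tsum_mul_left]
        exact mul_le_mul_right (rs_inner_bound μ X hX C₀ C₁ hC₀ hC₁ hXtail m v) _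
    _ = ENNReal.ofReal K * rsMgf μ X (C₁ / 2) m := by
        rw [rsMgf, ← ENNReal.tsum_mul_left]
        exact tsum_congr fun v => by ring
  
include hX hC₀ hC₁ hXtail in
lemma rsMgf_le (m : ℕ) :
    rsMgf μ X (C₁ / 2) m
      ≤ ENNReal.ofReal (1 + C₀ * Real.exp (C₁ / 2) * (1 - Real.exp (-(C₁ / 2)))⁻¹) ^ m := by
  induction m with
  | zero => rw [rsMgf_zero]; simp
  | succ m ih =>
      calc rsMgf μ X (C₁ / 2) (m + 1)
          ≤ ENNReal.ofReal (1 + C₀ * Real.exp (C₁ / 2) * (1 - Real.exp (-(C₁ / 2)))⁻¹)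
              * rsMgf μ X (C₁ / 2) m := rsMgf_succ_le μ X hX C₀ C₁ hC₀ hC₁ hXtail m
        _ ≤ ENNReal.ofReal (1 + C₀ * Real.exp (C₁ / 2) * (1 - Real.exp (-(C₁ / 2)))⁻¹)
              * ENNReal.ofReal (1 + C₀ * Real.exp (C₁ / 2) * (1 - Real.exp (-(C₁ / 2)))⁻¹) ^ m :=
            mul_le_mul_right ih _
        _ = _ := (pow_succ' _ m).symm

include hX hC₀ hC₁ hXtail in
lemma rs_chernoff (m n : ℕ) :
    μ {ω | n < ∑ i ∈ Finset.range m, X i ω}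
      ≤ ENNReal.ofReal (Real.exp (-(C₁ / 2) * n))
          * ENNReal.ofReal (1 + C₀ * Real.exp (C₁ / 2) * (1 - Real.exp (-(C₁ / 2)))⁻¹) ^ m := by
  have hTmeas : MeasurableSet {ω | n < ∑ i ∈ Finset.range m, X i ω} :=
    measurableSet_lt measurable_const (Finset.measurable_sum _ fun i _ => hX i)
  rw [rsAtom_partition μ X hX m hTmeas]
  have hterm : ∀ v : Fin m → ℕ,
      μ (rsAtom X m v ∩ {ω | n < ∑ i ∈ Finset.range m, X i ω})
        ≤ ENNReal.ofReal (Real.exp (-(C₁ / 2) * n))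
            * (ENNReal.ofReal (Real.exp (C₁ / 2 * ∑ j, (v j : ℝ))) * μ (rsAtom X m v)) := by
    intro v
    by_cases hv : n < ∑ j : Fin m, v j
    · have hone : (1 : ℝ≥0∞) ≤ ENNReal.ofReal (Real.exp (-(C₁ / 2) * n))
          * ENNReal.ofReal (Real.exp (C₁ / 2 * ∑ j, (v j : ℝ))) := by
        rw [← ENNReal.ofReal_mul (Real.exp_pos _).le, ← Real.exp_add]
        refine ENNReal.one_le_ofReal.2 (Real.one_le_exp ?_)
        have hcast : (n : ℝ) + 1 ≤ ∑ j : Fin m, (v j : ℝ) := by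
          have : (n + 1 : ℕ) ≤ ∑ j : Fin m, v j := hv
          calc (n : ℝ) + 1 = ((n + 1 : ℕ) : ℝ) := by push_cast; ring
            _ ≤ ((∑ j : Fin m, v j : ℕ) : ℝ) := by exact_mod_cast this
            _ = ∑ j : Fin m, (v j : ℝ) := by push_cast; ring
        nlinarith [hC₁]
      calc μ (rsAtom X m v ∩ {ω | n < ∑ i ∈ Finset.range m, X i ω})
          ≤ μ (rsAtom X m v) := measure_mono Set.inter_subset_left
        _ = 1 * μ (rsAtom X m v) := (one_mul _).symm
        _ ≤ ENNReal.ofReal (Real.exp (-(C₁ / 2) * n))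
              * ENNReal.ofReal (Real.exp (C₁ / 2 * ∑ j, (v j : ℝ))) * μ (rsAtom X m v) :=
            mul_le_mul_left hone _
        _ = ENNReal.ofReal (Real.exp (-(C₁ / 2) * n))
              * (ENNReal.ofReal (Real.exp (C₁ / 2 * ∑ j, (v j : ℝ))) * μ (rsAtom X m v)) :=
            mul_assoc _ _ _
    · have hempty : rsAtom X m v ∩ {ω | n < ∑ i ∈ Finset.range m, X i ω} = ∅ := by
        ext ω
        simp only [Set.mem_inter_iff, Set.mem_setOf_eq, Set.mem_empty_iff_false, iff_false,
          not_and]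
        intro hω hlt
        apply hv
        have hsum : ∑ i ∈ Finset.range m, X i ω = ∑ j : Fin m, v j := by
          rw [← Fin.sum_univ_eq_sum_range]
          exact Finset.sum_congr rfl fun j _ => hω j
        omega
      rw [hempty]
      simp
  calc ∑' v : Fin m → ℕ, μ (rsAtom X m v ∩ {ω | n < ∑ i ∈ Finset.range m, X i ω})
      ≤ ∑' v : Fin m → ℕ, ENNReal.ofReal (Real.exp (-(C₁ / 2) * n))
          * (ENNReal.ofReal (Real.exp (C₁ / 2 * ∑ j, (v j : ℝ))) * μ (rsAtom X m v)) :=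
        ENNReal.tsum_le_tsum hterm
    _ = ENNReal.ofReal (Real.exp (-(C₁ / 2) * n)) * rsMgf μ X (C₁ / 2) m := by
        rw [ENNReal.tsum_mul_left, rsMgf]
    _ ≤ ENNReal.ofReal (Real.exp (-(C₁ / 2) * n))
          * ENNReal.ofReal (1 + C₀ * Real.exp (C₁ / 2) * (1 - Real.exp (-(C₁ / 2)))⁻¹) ^ m :=
        mul_le_mul_right (rsMgf_le μ X hX C₀ C₁ hC₀ hC₁ hXtail m) _

end TailBounds

end RandomSumAux

/-- A random geometric sum of nonnegative-integer random variables with strong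
uniform exponential tail decay, with an exponentially decaying number of terms, has an
exponentially decaying tail. -/
theorem random_sum_exponential_tail (Ω : Type) [MeasurableSpace Ω] (μ : Measure Ω)
    [IsProbabilityMeasure μ] (X : ℕ → Ω → ℕ) (hXmeas : ∀ i, Measurable (X i))
    (Y : Ω → ℕ) (hYmeas : Measurable Y) (hY1 : ∀ ω, 1 ≤ Y ω)
    (C₀ C₁ : ℝ) (hC₀ : 0 < C₀) (hC₁ : 0 < C₁)
    (hXtail : ∀ (i : ℕ) (v : ℕ → ℕ) (n : ℕ),
      0 < μ {ω | ∀ j < i, X j ω = v j} →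
      (μ[|{ω | ∀ j < i, X j ω = v j}]) {ω | n < X i ω}
        ≤ ENNReal.ofReal (C₀ * Real.exp (-C₁ * n)))
    (hYtail : ∀ n : ℕ, μ {ω | n < Y ω} ≤ ENNReal.ofReal (C₀ * Real.exp (-C₁ * n))) :
    ∃ C₀' C₁' : ℝ, 0 < C₀' ∧ 0 < C₁' ∧
      ∀ n : ℕ,
        μ {ω | n < ∑ i ∈ Finset.range (Y ω), X i ω}
          ≤ ENNReal.ofReal (C₀' * Real.exp (-C₁' * n)) := by
  classical
  set K := 1 + C₀ * Real.exp (C₁ / 2) * (1 - Real.exp (-(C₁ / 2)))⁻¹ with hK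
  have hsubpos : (0 : ℝ) < 1 - Real.exp (-(C₁ / 2)) := by
    have := Real.exp_lt_one_iff.2 (show -(C₁ / 2) < 0 by linarith)
    linarith
  have hK1 : 1 < K := by
    have : 0 < C₀ * Real.exp (C₁ / 2) * (1 - Real.exp (-(C₁ / 2)))⁻¹ := by positivity
    rw [hK]; linarith
  have hKpos : (0 : ℝ) < K := lt_trans one_pos hK1
  set L := Real.log K with hL
  have hLpos : 0 < L := Real.log_pos hK1
  set α := (C₁ / 2) / (2 * L) with hα
  have hαpos : 0 < α := by positivity
  refine ⟨C₀ + Real.exp L, min (C₁ * α) (C₁ / 4), by positivity,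
    lt_min (by positivity) (by positivity), ?_⟩
  intro n
  set m := Nat.ceil (α * n) with hm
  have hincl : {ω | n < ∑ i ∈ Finset.range (Y ω), X i ω}
      ⊆ {ω | m < Y ω} ∪ {ω | n < ∑ i ∈ Finset.range m, X i ω} := by
    intro ω hω
    by_cases hY : m < Y ω
    · exact Or.inl hY
    · right
      simp only [Set.mem_setOf_eq] at hω ⊢
      exact lt_of_lt_of_le hω (Finset.sum_le_sum_of_subset
        (Finset.range_subset_range.2 (le_of_not_gt hY)))
  have h1 := hYtail m
  have h2 := rs_chernoff μ X hXmeas C₀ C₁ hC₀ hC₁ hXtail m n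
  rw [← hK] at h2
  have hmge : α * n ≤ (m : ℝ) := Nat.le_ceil _
  have hmle : (m : ℝ) ≤ α * n + 1 := le_of_lt (Nat.ceil_lt_add_one (by positivity))
  have hb1 : C₀ * Real.exp (-C₁ * m) ≤ C₀ * Real.exp (-C₁ * (α * n)) := by
    have h : -C₁ * (m : ℝ) ≤ -C₁ * (α * n) := by nlinarith
    exact mul_le_mul_of_nonneg_left (Real.exp_le_exp.2 h) hC₀.le
  have hKeq : K = Real.exp L := (Real.exp_log hKpos).symm
  have hb2 : Real.exp (-(C₁ / 2) * n) * K ^ m ≤ Real.exp L * Real.exp (-(C₁ / 4) * n) := by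
    have hpow : K ^ m = Real.exp (L * m) := by rw [hKeq, ← Real.exp_nat_mul, mul_comm]
    rw [hpow, ← Real.exp_add, ← Real.exp_add]
    refine Real.exp_le_exp.2 ?_
    have h3 : L * (m : ℝ) ≤ L * (α * n + 1) := mul_le_mul_of_nonneg_left hmle hLpos.le
    have h4 : L * α = C₁ / 4 := by
      rw [hα]
      field_simp
      ring
    have h5 : L * (α * n + 1) = C₁ / 4 * n + L := by
      rw [mul_add, mul_one, ← mul_assoc, h4]
    linarith
  have e1 : Real.exp (-C₁ * (α * n)) ≤ Real.exp (-(min (C₁ * α) (C₁ / 4)) * n) := by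
    refine Real.exp_le_exp.2 ?_
    have h := min_le_left (C₁ * α) (C₁ / 4)
    have h' := mul_le_mul_of_nonneg_right h (by positivity : (0 : ℝ) ≤ (n : ℝ))
    nlinarith
  have e2 : Real.exp (-(C₁ / 4) * n) ≤ Real.exp (-(min (C₁ * α) (C₁ / 4)) * n) := by
    refine Real.exp_le_exp.2 ?_
    have h := min_le_right (C₁ * α) (C₁ / 4)
    have h' := mul_le_mul_of_nonneg_right h (by positivity : (0 : ℝ) ≤ (n : ℝ))
    nlinarith
  have t1 : C₀ * Real.exp (-C₁ * m) ≤ C₀ * Real.exp (-(min (C₁ * α) (C₁ / 4)) * n) :=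
    le_trans hb1 (mul_le_mul_of_nonneg_left e1 hC₀.le)
  have t2 : Real.exp (-(C₁ / 2) * n) * K ^ m ≤ Real.exp L * Real.exp (-(min (C₁ * α) (C₁ / 4)) * n) :=
    le_trans hb2 (mul_le_mul_of_nonneg_left e2 (Real.exp_pos _).le)
  calc μ {ω | n < ∑ i ∈ Finset.range (Y ω), X i ω}
      ≤ μ ({ω | m < Y ω} ∪ {ω | n < ∑ i ∈ Finset.range m, X i ω}) := measure_mono hincl
    _ ≤ μ {ω | m < Y ω} + μ {ω | n < ∑ i ∈ Finset.range m, X i ω} := measure_union_le _ _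
    _ ≤ ENNReal.ofReal (C₀ * Real.exp (-C₁ * m))
          + ENNReal.ofReal (Real.exp (-(C₁ / 2) * n)) * ENNReal.ofReal K ^ m :=
        add_le_add h1 h2
    _ = ENNReal.ofReal (C₀ * Real.exp (-C₁ * m) + Real.exp (-(C₁ / 2) * n) * K ^ m) := by
        rw [← ENNReal.ofReal_pow hKpos.le, ← ENNReal.ofReal_mul (Real.exp_pos _).le,
          ← ENNReal.ofReal_add (by positivity) (by positivity)]
    _ ≤ ENNReal.ofReal ((C₀ + Real.exp L) * Real.exp (-(min (C₁ * α) (C₁ / 4)) * n)) := by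
        refine ENNReal.ofReal_le_ofReal ?_
        calc C₀ * Real.exp (-C₁ * m) + Real.exp (-(C₁ / 2) * n) * K ^ m
            ≤ C₀ * Real.exp (-(min (C₁ * α) (C₁ / 4)) * n) + Real.exp L * Real.exp (-(min (C₁ * α) (C₁ / 4)) * n) := add_le_add t1 t2
          _ = (C₀ + Real.exp L) * Real.exp (-(min (C₁ * α) (C₁ / 4)) * n) := (add_mul _ _ _).symm
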